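/- Fix n ≥ 2 and 0 ≤ k ≤ n-2. For a permutation π of {1,...,n}, let j be the position of the maximum value n, and define the statistic st(π) to be the number of indices i < j such that π_i is greater than every entry π_ℓ with ℓ > j. Then the number of permutations π of {1,...,n} with st(π) = k equals n!/((k+1)(k+2)). Moreover, the number of permutations with st(π) = n-1 (i.e., n in the last position) equals (n-1)!. -/

import Mathlib

/-- For a permutation `π` of `Fin n` (one-line notation: `π i` is the entry in
position `i`), with `j` the position of the maximum value, `st25` counts the
indices `i < j` such that `π i` is greater than every entry `π ℓ` with `ℓ > j`. -/
def st25 {n : ℕ} (hn : 0 < n) (π : Equiv.Perm (Fin n)) : ℕ :=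
  (Finset.univ.filter fun i : Fin n =>
    i < π.symm ⟨n - 1, by omega⟩ ∧
      ∀ ℓ : Fin n, π.symm ⟨n - 1, by omega⟩ < ℓ → π ℓ < π i).card

open Finset Equiv

variable {α : Type*} [Fintype α] [DecidableEq α]

lemma fiber_card_const (a b b' : α) :
    (univ.filter fun σ : Perm α => σ a = b).card
      = (univ.filter fun σ : Perm α => σ a = b').card := by
  apply Finset.card_equiv (Equiv.mulLeft (Equiv.swap b b'))
  intro σ
  simp only [mem_filter, mem_univ, true_and, Equiv.coe_mulLeft, Perm.mul_apply]
  constructor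
  · rintro rfl; simp
  · intro h
    have := congrArg (Equiv.swap b b') h
    simpa [Equiv.swap_apply_right] using this

lemma card_perm_fix_one (a b : α) :
    (univ.filter fun σ : Perm α => σ a = b).card = (Fintype.card α - 1).factorial := by
  have hcard : ∑ c : α, (univ.filter fun σ : Perm α => σ a = c).card
      = (Fintype.card α).factorial := by
    rw [← Fintype.card_perm, ← Finset.card_univ]
    exact (Finset.card_eq_sum_card_fiberwise (f := fun σ : Perm α => σ a)
      (fun σ _ => mem_univ _)).symm
  have heq : ∀ c : α, (univ.filter fun σ : Perm α => σ a = c).card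
      = (univ.filter fun σ : Perm α => σ a = b).card := fun c => fiber_card_const a c b
  rw [Finset.sum_congr rfl (fun c _ => heq c), Finset.sum_const, card_univ, smul_eq_mul] at hcard
  have hpos : 0 < Fintype.card α := Fintype.card_pos_iff.mpr ⟨a⟩
  have : Fintype.card α = (Fintype.card α - 1) + 1 := by omega
  rw [this, Nat.factorial_succ] at hcard
  exact Nat.eq_of_mul_eq_mul_left (by omega) hcard

lemma fiber2_card_const (a₁ a₂ b₁ : α) (c c' : α) (hc : c ≠ b₁) (hc' : c' ≠ b₁) :
    (univ.filter fun σ : Perm α => σ a₁ = b₁ ∧ σ a₂ = c).card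
      = (univ.filter fun σ : Perm α => σ a₁ = b₁ ∧ σ a₂ = c').card := by
  apply Finset.card_equiv (Equiv.mulLeft (Equiv.swap c c'))
  intro σ
  simp only [mem_filter, mem_univ, true_and, Equiv.coe_mulLeft, Perm.mul_apply]
  constructor
  · rintro ⟨rfl, rfl⟩
    exact ⟨Equiv.swap_apply_of_ne_of_ne hc.symm hc'.symm, by simp⟩
  · rintro ⟨h1, h2⟩
    have e1 := congrArg (Equiv.swap c c') h1
    have e2 := congrArg (Equiv.swap c c') h2
    rw [Equiv.swap_apply_self] at e1 e2
    rw [Equiv.swap_apply_of_ne_of_ne hc.symm hc'.symm] at e1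
    rw [Equiv.swap_apply_right] at e2
    exact ⟨e1, e2⟩

lemma card_perm_fix_two (a₁ a₂ b₁ b₂ : α) (ha : a₁ ≠ a₂) (hb : b₁ ≠ b₂) :
    (univ.filter fun σ : Perm α => σ a₁ = b₁ ∧ σ a₂ = b₂).card
      = (Fintype.card α - 2).factorial := by
  have hm : 2 ≤ Fintype.card α := by
    have : ({a₁, a₂} : Finset α).card ≤ Fintype.card α := by
      simpa using Finset.card_le_univ {a₁, a₂}
    rwa [Finset.card_insert_of_notMem (by simpa using ha), Finset.card_singleton] at this
  have hsplit : (univ.filter fun σ : Perm α => σ a₁ = b₁).card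
      = ∑ c ∈ univ.erase b₁,
          ((univ.filter fun σ : Perm α => σ a₁ = b₁).filter fun σ => σ a₂ = c).card := by
    apply Finset.card_eq_sum_card_fiberwise (f := fun σ : Perm α => σ a₂)
    intro σ hσ
    simp only [Finset.mem_coe, mem_filter, mem_univ, true_and] at hσ
    refine Finset.mem_erase.mpr ⟨?_, mem_univ _⟩
    intro h
    exact ha (σ.injective (h.trans hσ.symm)).symm
  have hff : ∀ c : α, ((univ.filter fun σ : Perm α => σ a₁ = b₁).filter fun σ => σ a₂ = c)
      = univ.filter fun σ : Perm α => σ a₁ = b₁ ∧ σ a₂ = c := by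
    intro c; rw [Finset.filter_filter]
  have heq : ∀ c ∈ univ.erase b₁,
      ((univ.filter fun σ : Perm α => σ a₁ = b₁).filter fun σ => σ a₂ = c).card
        = (univ.filter fun σ : Perm α => σ a₁ = b₁ ∧ σ a₂ = b₂).card := by
    intro c hc
    rw [hff c]
    exact fiber2_card_const a₁ a₂ b₁ c b₂ (Finset.mem_erase.mp hc).1 hb.symm
  rw [Finset.sum_congr rfl heq, Finset.sum_const, smul_eq_mul, card_perm_fix_one,
    Finset.card_erase_of_mem (mem_univ b₁), Finset.card_univ] at hsplit
  have h1 : Fintype.card α - 1 = (Fintype.card α - 2) + 1 := by omega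
  rw [h1, Nat.factorial_succ] at hsplit
  exact (Nat.eq_of_mul_eq_mul_left (by omega) hsplit).symm

def aemb (n k : ℕ) (h : k + 2 ≤ n) : Fin (k + 2) ↪ Fin n :=
  ⟨fun i => ⟨n - 2 - k + i.val, by omega⟩, by
    intro i j hij
    have := Fin.val_eq_of_eq hij
    simp only at this
    exact Fin.ext (by omega)⟩

lemma aemb_val (n k : ℕ) (h : k + 2 ≤ n) (i : Fin (k + 2)) :
    (aemb n k h i : Fin n).val = n - 2 - k + i.val := rfl

def IsGood (n k : ℕ) (h : k + 2 ≤ n) (ρ : Perm (Fin n)) : Prop :=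
  (∀ i : Fin (k + 2), 0 < i.val → i.val < k + 1 →
      ρ (aemb n k h i) < ρ (aemb n k h ⟨k + 1, by omega⟩)) ∧
    ρ (aemb n k h ⟨k + 1, by omega⟩) < ρ (aemb n k h ⟨0, by omega⟩)

instance (n k : ℕ) (h : k + 2 ≤ n) : DecidablePred (IsGood n k h) := by
  unfold IsGood; infer_instance

lemma inner_count (n k : ℕ) (h : k + 2 ≤ n) (ρ : Perm (Fin n)) :
    (univ.filter fun τ : Perm (Fin (k + 2)) =>
        IsGood n k h (ρ * (τ.viaEmbedding (aemb n k h)))).card = k.factorial := by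
  classical
  set a := aemb n k h with ha
  set c : Fin (k + 2) → Fin n := fun i => ρ (a i) with hc
  have hcinj : Function.Injective c := fun i j hij => a.injective (ρ.injective hij)
  -- max index
  obtain ⟨jm, -, hjm⟩ := Finset.exists_max_image (univ : Finset (Fin (k + 2))) c ⟨⟨0, by omega⟩, mem_univ _⟩
  have hjm' : ∀ i, i ≠ jm → c i < c jm := fun i hi =>
    lt_of_le_of_ne (hjm i (mem_univ i)) (fun hci => hi (hcinj hci))
  -- second max index
  have hne : ((univ : Finset (Fin (k + 2))).erase jm).Nonempty := by
    rw [← Finset.card_pos, Finset.card_erase_of_mem (mem_univ _), Finset.card_univ,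
      Fintype.card_fin]
    omega
  obtain ⟨js, hjs_mem, hjs⟩ := Finset.exists_max_image _ c hne
  have hjs_ne : js ≠ jm := (Finset.mem_erase.mp hjs_mem).1
  have hjs' : ∀ i, i ≠ jm → i ≠ js → c i < c js := fun i hi hi' =>
    lt_of_le_of_ne (hjs i (Finset.mem_erase.mpr ⟨hi, mem_univ _⟩))
      (fun hci => hi' (hcinj hci))
  have key : ∀ τ : Perm (Fin (k + 2)),
      IsGood n k h (ρ * (τ.viaEmbedding a)) ↔
        (τ ⟨0, by omega⟩ = jm ∧ τ ⟨k + 1, by omega⟩ = js) := by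
    intro τ
    have happ : ∀ i : Fin (k + 2), (ρ * (τ.viaEmbedding a)) (a i) = c (τ i) := by
      intro i
      rw [Perm.mul_apply, Perm.viaEmbedding_apply]
    constructor
    · rintro ⟨h1, h2⟩
      rw [happ, happ] at h2
      have h1 : ∀ i : Fin (k + 2), 0 < i.val → i.val < k + 1 → c (τ i) < c (τ ⟨k + 1, by omega⟩) :=
        fun i hi1 hi2 => by have := h1 i hi1 hi2; rwa [happ, happ] at this
      have hτ0 : τ ⟨0, by omega⟩ = jm := by
        apply hcinj
        refine le_antisymm (hjm _ (mem_univ _)) ?_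
        have : ∀ i : Fin (k + 2), c i ≤ c (τ ⟨0, by omega⟩) := by
          intro i
          obtain ⟨m, rfl⟩ := τ.surjective i
          by_cases hm0 : m = ⟨0, by omega⟩
          · subst hm0; exact le_refl _
          · by_cases hml : m = ⟨k + 1, by omega⟩
            · subst hml; exact le_of_lt h2
            · have hmid : 0 < m.val ∧ m.val < k + 1 := by
                have hlt := m.isLt
                have hv0 : m.val ≠ 0 := fun hv => hm0 (Fin.ext hv)
                have hvl : m.val ≠ k + 1 := by simpa [Fin.ext_iff] using hml
                omega
              exact le_of_lt (lt_trans (h1 m hmid.1 hmid.2) h2)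
        exact this jm
      refine ⟨hτ0, ?_⟩
      apply hcinj
      have hlast_ne : τ ⟨k + 1, by omega⟩ ≠ jm := by
        rw [← hτ0]
        intro hcontra
        have := τ.injective hcontra
        simp [Fin.ext_iff] at this
      refine le_antisymm (hjs _ (Finset.mem_erase.mpr ⟨hlast_ne, mem_univ _⟩)) ?_
      have : ∀ i : Fin (k + 2), i ≠ jm → c i ≤ c (τ ⟨k + 1, by omega⟩) := by
        intro i hi
        obtain ⟨m, rfl⟩ := τ.surjective i
        by_cases hml : m = ⟨k + 1, by omega⟩
        · subst hml; exact le_refl _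
        · have hm0 : m ≠ ⟨0, by omega⟩ := by
            rintro rfl; exact hi hτ0
          have hmid : 0 < m.val ∧ m.val < k + 1 := by
            have hlt := m.isLt
            have hv0 : m.val ≠ 0 := fun hv => hm0 (Fin.ext hv)
            have hvl : m.val ≠ k + 1 := by simpa [Fin.ext_iff] using hml
            omega
          exact le_of_lt (h1 m hmid.1 hmid.2)
      exact this js hjs_ne
    · rintro ⟨h0, hl⟩
      constructor
      · intro i hi1 hi2
        rw [happ, happ, hl]
        apply hjs'
        · rw [← h0]
          intro hcontra
          have := τ.injective hcontra
          have h' : i.val = 0 := congrArg Fin.val this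
          omega
        · rw [← hl]
          intro hcontra
          have := τ.injective hcontra
          simp [Fin.ext_iff] at this
          omega
      · rw [happ, happ, h0, hl]
        exact hjm' js hjs_ne
  have : (univ.filter fun τ : Perm (Fin (k + 2)) =>
      IsGood n k h (ρ * (τ.viaEmbedding a))) =
      univ.filter fun τ : Perm (Fin (k + 2)) =>
        τ ⟨0, by omega⟩ = jm ∧ τ ⟨k + 1, by omega⟩ = js := by
    apply Finset.filter_congr
    intro τ _
    exact key τ
  rw [this, card_perm_fix_two _ _ _ _ (by simp [Fin.ext_iff]) (Ne.symm hjs_ne),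
    Fintype.card_fin]
  norm_num

lemma count_good (n k : ℕ) (h : k + 2 ≤ n) :
    (univ.filter (IsGood n k h)).card * ((k + 1) * (k + 2)) = n.factorial := by
  classical
  set N := (univ.filter (IsGood n k h)).card with hN
  have T1 : ∑ ρ : Perm (Fin n),
      (univ.filter fun τ : Perm (Fin (k + 2)) =>
        IsGood n k h (ρ * τ.viaEmbedding (aemb n k h))).card
      = n.factorial * k.factorial := by
    rw [Finset.sum_congr rfl (fun ρ _ => inner_count n k h ρ), Finset.sum_const,
      Finset.card_univ, Fintype.card_perm, Fintype.card_fin, smul_eq_mul]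
  have T2 : ∑ ρ : Perm (Fin n),
      (univ.filter fun τ : Perm (Fin (k + 2)) =>
        IsGood n k h (ρ * τ.viaEmbedding (aemb n k h))).card
      = (k + 2).factorial * N := by
    have swap : ∑ ρ : Perm (Fin n),
        (univ.filter fun τ : Perm (Fin (k + 2)) =>
          IsGood n k h (ρ * τ.viaEmbedding (aemb n k h))).card
        = ∑ τ : Perm (Fin (k + 2)),
            (univ.filter fun ρ : Perm (Fin n) =>
              IsGood n k h (ρ * τ.viaEmbedding (aemb n k h))).card := by
      simp only [Finset.card_filter]
      exact Finset.sum_comm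
    rw [swap]
    have fib : ∀ τ : Perm (Fin (k + 2)),
        (univ.filter fun ρ : Perm (Fin n) =>
          IsGood n k h (ρ * τ.viaEmbedding (aemb n k h))).card = N := by
      intro τ
      apply Finset.card_equiv (Equiv.mulRight (τ.viaEmbedding (aemb n k h)))
      intro ρ
      simp [Equiv.coe_mulRight]
    rw [Finset.sum_congr rfl (fun τ _ => fib τ), Finset.sum_const, Finset.card_univ,
      Fintype.card_perm, Fintype.card_fin, smul_eq_mul]
  have key : n.factorial * k.factorial = (k + 2).factorial * N := T1.symm.trans T2
  have expand : (k + 2).factorial = (k + 2) * ((k + 1) * k.factorial) := by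
    rw [Nat.factorial_succ, Nat.factorial_succ]
  apply Nat.eq_of_mul_eq_mul_right k.factorial_pos
  calc N * ((k + 1) * (k + 2)) * k.factorial = (k + 2).factorial * N := by rw [expand]; ring
    _ = n.factorial * k.factorial := key.symm

lemma st25_of_last (n : ℕ) (hn : 2 ≤ n) (π : Perm (Fin n))
    (hj : (π.symm ⟨n - 1, by omega⟩ : Fin n).val = n - 1) :
    st25 (Nat.lt_of_lt_of_le (by decide) hn) π = n - 1 := by
  unfold st25
  have hfe : (univ.filter fun i : Fin n =>
      i < π.symm ⟨n - 1, by omega⟩ ∧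
        ∀ ℓ : Fin n, π.symm ⟨n - 1, by omega⟩ < ℓ → π ℓ < π i)
      = Finset.Iio (π.symm ⟨n - 1, by omega⟩) := by
    ext i
    simp only [mem_filter, mem_univ, true_and, Finset.mem_Iio]
    constructor
    · exact fun h => h.1
    · intro h
      refine ⟨h, fun ℓ hℓ => absurd hℓ ?_⟩
      have := ℓ.isLt
      simp only [Fin.lt_def, hj]
      omega
  rw [hfe, Fin.card_Iio, hj]

lemma st25_val (n : ℕ) (hn : 2 ≤ n) (π : Perm (Fin n))
    (hj : (π.symm ⟨n - 1, by omega⟩ : Fin n).val < n - 1) :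
    ∃ M : Fin n,
      (∃ ℓ, π.symm ⟨n - 1, by omega⟩ < ℓ ∧ π ℓ = M) ∧
      (∀ ℓ, π.symm ⟨n - 1, by omega⟩ < ℓ → π ℓ ≤ M) ∧
      M.val ≤ n - 2 ∧
      st25 (Nat.lt_of_lt_of_le (by decide) hn) π = n - 2 - M.val := by
  classical
  set j := (π.symm ⟨n - 1, by omega⟩ : Fin n) with hjdef
  have hE : ((Finset.Ioi j).image π).Nonempty := by
    refine ⟨π ⟨n - 1, by omega⟩, Finset.mem_image.mpr ⟨⟨n - 1, by omega⟩, ?_, rfl⟩⟩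
    rw [Finset.mem_Ioi]
    exact Fin.lt_def.mpr (by simpa using hj)
  set M := ((Finset.Ioi j).image π).max' hE with hMdef
  have hMmem : M ∈ (Finset.Ioi j).image π := Finset.max'_mem _ _
  obtain ⟨ℓ₀, hℓ₀, hℓ₀M⟩ := Finset.mem_image.mp hMmem
  rw [Finset.mem_Ioi] at hℓ₀
  have hle : ∀ ℓ, j < ℓ → π ℓ ≤ M := fun ℓ hℓ =>
    Finset.le_max' _ _ (Finset.mem_image.mpr ⟨ℓ, Finset.mem_Ioi.mpr hℓ, rfl⟩)
  have hMne : M ≠ ⟨n - 1, by omega⟩ := by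
    intro hcontra
    have : ℓ₀ = j := by
      rw [hjdef, ← hcontra, ← hℓ₀M, Equiv.symm_apply_apply]
    exact absurd this (ne_of_gt hℓ₀)
  have hMval : M.val ≤ n - 2 := by
    have h1 := M.isLt
    have h2 : M.val ≠ n - 1 := by simpa [Fin.ext_iff] using hMne
    omega
  refine ⟨M, ⟨ℓ₀, hℓ₀, hℓ₀M⟩, hle, hMval, ?_⟩
  have hpos : ∀ v : Fin n, M < v → π.symm v ≤ j := by
    intro v hv
    by_contra hcontra
    push_neg at hcontra
    have := hle (π.symm v) hcontra
    rw [Equiv.apply_symm_apply] at this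
    exact absurd hv (not_lt.mpr this)
  unfold st25
  have hfe : (univ.filter fun i : Fin n =>
      i < π.symm ⟨n - 1, by omega⟩ ∧
        ∀ ℓ : Fin n, π.symm ⟨n - 1, by omega⟩ < ℓ → π ℓ < π i)
      = univ.filter fun i : Fin n => M < π i ∧ π i ≠ ⟨n - 1, by omega⟩ := by
    ext i
    simp only [mem_filter, mem_univ, true_and]
    constructor
    · rintro ⟨hij, hall⟩
      refine ⟨hℓ₀M ▸ hall ℓ₀ hℓ₀, ?_⟩
      intro hcontra
      have : i = j := by
        rw [hjdef, ← hcontra, Equiv.symm_apply_apply]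
      rw [this] at hij
      exact lt_irrefl j hij
    · rintro ⟨hM, hne⟩
      have hij : i ≤ j := by
        have := hpos (π i) hM
        rwa [Equiv.symm_apply_apply] at this
      have hij' : i ≠ j := by
        intro hcontra
        apply hne
        rw [hcontra]
        exact Equiv.apply_symm_apply π ⟨n - 1, by omega⟩
      refine ⟨lt_of_le_of_ne hij hij', fun ℓ hℓ => lt_of_le_of_lt (hle ℓ hℓ) hM⟩
  rw [hfe]
  have hcard : (univ.filter fun i : Fin n => M < π i ∧ π i ≠ ⟨n - 1, by omega⟩).card
      = (univ.filter fun v : Fin n => M < v ∧ v ≠ ⟨n - 1, by omega⟩).card := by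
    apply Finset.card_equiv π
    intro i
    simp only [mem_filter, mem_univ, true_and]
  rw [hcard]
  have hIoo : (univ.filter fun v : Fin n => M < v ∧ v ≠ ⟨n - 1, by omega⟩)
      = Finset.Ioo M ⟨n - 1, by omega⟩ := by
    ext v
    simp only [mem_filter, mem_univ, true_and, Finset.mem_Ioo]
    have h1 := v.isLt
    constructor
    · rintro ⟨h2, h3⟩
      have : v.val ≠ n - 1 := by simpa [Fin.ext_iff] using h3
      exact ⟨h2, Fin.lt_def.mpr (by simpa using by omega)⟩
    · rintro ⟨h2, h3⟩
      have := Fin.lt_def.mp h3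
      simp only at this
      exact ⟨h2, by simp [Fin.ext_iff]; omega⟩
  rw [hIoo, Fin.card_Ioo]
  simp only
  omega

lemma st25_eq_last_iff (n : ℕ) (hn : 2 ≤ n) (π : Perm (Fin n)) :
    st25 (Nat.lt_of_lt_of_le (by decide) hn) π = n - 1 ↔
      (π.symm ⟨n - 1, by omega⟩ : Fin n).val = n - 1 := by
  constructor
  · intro hst
    by_contra hc
    have hj : (π.symm ⟨n - 1, by omega⟩ : Fin n).val < n - 1 := by
      have := (π.symm ⟨n - 1, by omega⟩ : Fin n).isLt
      omega
    obtain ⟨M, -, -, hMval, hval⟩ := st25_val n hn π hj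
    omega
  · exact st25_of_last n hn π

lemma aemb_last (n k : ℕ) (h : k + 2 ≤ n) :
    aemb n k h ⟨k + 1, by omega⟩ = ⟨n - 1, by omega⟩ := by
  simp only [Fin.ext_iff, aemb_val]
  omega

lemma st25_eq_iff_good (n k : ℕ) (h : k + 2 ≤ n) (π : Perm (Fin n)) :
    st25 (by omega : 0 < n) π = k ↔ IsGood n k h π.symm := by
  have hn1 : n - 1 < n := by omega
  by_cases hj : (π.symm ⟨n - 1, hn1⟩ : Fin n).val = n - 1
  · constructor
    · intro hst
      rw [st25_of_last n (by omega) π hj] at hst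
      omega
    · rintro ⟨-, hg2⟩
      exfalso
      rw [aemb_last] at hg2
      have h1 := Fin.lt_def.mp hg2
      rw [hj] at h1
      have h2 := (π.symm (aemb n k h ⟨0, by omega⟩)).isLt
      omega
  · have hj' : (π.symm ⟨n - 1, hn1⟩ : Fin n).val < n - 1 := by
      have := (π.symm ⟨n - 1, hn1⟩ : Fin n).isLt
      omega
    obtain ⟨M, ⟨ℓ₀, hℓ₀, hℓ₀M⟩, hle, hMval, hval⟩ := st25_val n (by omega) π hj'
    have hsymmM : π.symm M = ℓ₀ := by rw [← hℓ₀M, Equiv.symm_apply_apply]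
    have hpos : ∀ v : Fin n, M < v → π.symm v ≤ π.symm ⟨n - 1, hn1⟩ := by
      intro v hv
      by_contra hcontra
      push_neg at hcontra
      have := hle (π.symm v) hcontra
      rw [Equiv.apply_symm_apply] at this
      exact absurd hv (not_lt.mpr this)
    rw [hval]
    constructor
    · intro hk
      have hMv : M.val = n - 2 - k := by omega
      constructor
      · intro i hi1 hi2
        rw [aemb_last]
        have hav := aemb_val n k h i
        have hMlt : M < aemb n k h i := by
          rw [Fin.lt_def, hav]
          omega
        have hne : (aemb n k h i : Fin n).val ≠ n - 1 := by
          rw [hav]; omega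
        have hle' := hpos _ hMlt
        refine lt_of_le_of_ne hle' ?_
        intro hcontra
        apply hne
        have := π.symm.injective hcontra
        rw [this]
      · rw [aemb_last]
        have ha0 : aemb n k h ⟨0, by omega⟩ = M := by
          rw [Fin.ext_iff, aemb_val]
          have hz : ((⟨0, by omega⟩ : Fin (k + 2)) : ℕ) = 0 := rfl
          omega
        rw [ha0, hsymmM]
        exact hℓ₀
    · rintro ⟨hg1, hg2⟩
      rw [aemb_last] at hg1 hg2
      suffices hMv : M.val = n - 2 - k by omega
      have hlow : n - 2 - k ≤ M.val := by
        have hv0 := aemb_val n k h ⟨0, by omega⟩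
        have hz : ((⟨0, by omega⟩ : Fin (k + 2)) : ℕ) = 0 := rfl
        have h2 := hle (π.symm (aemb n k h ⟨0, by omega⟩)) hg2
        rw [Equiv.apply_symm_apply] at h2
        have h3 := Fin.le_def.mp h2
        omega
      by_contra hcontra
      have hi : M.val - (n - 2 - k) < k + 2 := by omega
      have haM : aemb n k h ⟨M.val - (n - 2 - k), hi⟩ = M := by
        rw [Fin.ext_iff, aemb_val]
        have hz : ((⟨M.val - (n - 2 - k), hi⟩ : Fin (k + 2)) : ℕ) = M.val - (n - 2 - k) := rfl
        omega
      have h4 := hg1 ⟨M.val - (n - 2 - k), hi⟩ (by simp only [Fin.val_mk]; omega)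
        (by simp only [Fin.val_mk]; omega)
      rw [haM, hsymmM] at h4
      exact absurd hℓ₀ (not_lt.mpr (le_of_lt h4))

/-- For `n ≥ 2` and `k ≤ n-2`, the number of permutations of `{1,…,n}` with
`st = k` equals `n!/((k+1)(k+2))`, and the number with `st = n-1` equals `(n-1)!`. -/
theorem class25_distribution (n k : ℕ) (hn : 2 ≤ n) :
    (k ≤ n - 2 →
      ((Finset.univ.filter fun π : Equiv.Perm (Fin n) =>
          st25 (by omega) π = k).card : ℚ) =
        (n.factorial : ℚ) / ((k + 1) * (k + 2))) ∧
    (Finset.univ.filter fun π : Equiv.Perm (Fin n) =>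
        st25 (by omega : 0 < n) π = n - 1).card = (n - 1).factorial := by
  classical
  constructor
  · intro hk
    have h : k + 2 ≤ n := by omega
    have hfilter : (univ.filter fun π : Perm (Fin n) => st25 (by omega) π = k)
        = univ.filter fun π : Perm (Fin n) => IsGood n k h π.symm := by
      apply Finset.filter_congr
      intro π _
      exact st25_eq_iff_good n k h π
    have hcount : (univ.filter fun π : Perm (Fin n) => IsGood n k h π.symm).card
        = (univ.filter (IsGood n k h)).card := by
      apply Finset.card_equiv (Equiv.inv (Perm (Fin n)))
      intro π
      simp only [mem_filter, mem_univ, true_and, Equiv.inv_apply]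
      rfl
    have hC := count_good n k h
    rw [hfilter, hcount, eq_div_iff (by positivity)]
    exact_mod_cast congrArg (Nat.cast (R := ℚ)) hC
  · have hfilter : (univ.filter fun π : Perm (Fin n) => st25 (by omega : 0 < n) π = n - 1)
        = univ.filter fun π : Perm (Fin n) =>
            π ⟨n - 1, by omega⟩ = ⟨n - 1, by omega⟩ := by
      apply Finset.filter_congr
      intro π _
      rw [st25_eq_last_iff n hn π]
      constructor
      · intro hval
        have h1 : (π.symm ⟨n - 1, by omega⟩ : Fin n) = ⟨n - 1, by omega⟩ :=
          Fin.ext hval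
        rw [← h1, Equiv.apply_symm_apply]
        exact h1.symm
      · intro hval
        have h1 : (π.symm ⟨n - 1, by omega⟩ : Fin n) = ⟨n - 1, by omega⟩ := by
          rw [Equiv.symm_apply_eq, hval]
        rw [h1]
    rw [hfilter, card_perm_fix_one, Fintype.card_fin]
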